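/- In the 1–1 boosting procedure for the case M ≥ P(11)n, one iteration transforms a transition problem with M 1–1 flows into an intermediate transition problem with M' = M + P(00)n 1–1 flows, while preserving the property that each of the launch and landing steps uses each edge e of G exactly P(e)n times. -/

import Mathlib

/-- A directed graph on `{0,1}` (given by its edge set `E`) is primitive if for all
sufficiently large `N`, between every ordered pair of vertices there is a directed
path of length exactly `N`. -/
def IsPrimitive (E : Set (Bool × Bool)) : Prop :=
  ∃ N₀ : ℕ, ∀ N ≥ N₀, ∀ u v : Bool, ∃ f : ℕ → Bool,
    f 0 = u ∧ f N = v ∧ ∀ i < N, (f i, f (i + 1)) ∈ E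

/-- 1–1 boosting in the case `M ≥ P(11)n` (with `M` below the lower
bound `P(11)n + P(10)n − P(00)n`, which is when boosting is invoked).  One iteration
produces a launch row `r'` and a landing row `s'` such that the launch step `r → r'`
and the landing step `s' → s` each use every edge `e` exactly `P(e)n` times, and the
intermediate transition problem from `r'` to `s'` has `M' = M + P(00)n` 1–1 flows. -/
theorem stmt12 (E : Set (Bool × Bool)) (hprim : IsPrimitive E)
    (P : Bool × Bool → ℝ)
    (hsupp : ∀ e ∉ E, P e = 0) (hnn : ∀ e, 0 ≤ P e)
    (hsum : P (false, false) + P (false, true) + P (true, false) + P (true, true) = 1)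
    (hstat : ∀ u : Bool, P (u, false) + P (u, true) = P (false, u) + P (true, u))
    (hcase : P (true, true) ≤ P (false, false))
    (n : ℕ) (hint : ∀ e, ∃ z : ℤ, P e * n = (z : ℝ))
    (n₁ n₂ : ℕ)
    (hn1 : (n₁ : ℝ) = (P (false, false) + P (false, true)) * n)
    (hn2 : (n₂ : ℝ) = (P (true, false) + P (true, true)) * n)
    (r s : Fin n → Bool)
    (hr0 : (Finset.univ.filter (fun j => r j = false)).card = n₁)
    (hr1 : (Finset.univ.filter (fun j => r j = true)).card = n₂)
    (hs0 : (Finset.univ.filter (fun j => s j = false)).card = n₁)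
    (hs1 : (Finset.univ.filter (fun j => s j = true)).card = n₂)
    (M : ℕ)
    (hM : (Finset.univ.filter (fun j => r j = true ∧ s j = true)).card = M)
    (hMlb : P (true, true) * n ≤ (M : ℝ))
    (hMub : (M : ℝ) < P (true, true) * n + P (true, false) * n - P (false, false) * n) :
    ∃ r' s' : Fin n → Bool,
      (∀ e : Bool × Bool,
        ((Finset.univ.filter (fun j => (r j, r' j) = e)).card : ℝ) = P e * n) ∧
      (∀ e : Bool × Bool,
        ((Finset.univ.filter (fun j => (s' j, s j) = e)).card : ℝ) = P e * n) ∧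
      ((Finset.univ.filter (fun j => r' j = true ∧ s' j = true)).card : ℝ)
        = (M : ℝ) + P (false, false) * n := by
  classical
  -- Extract natural-number edge multiplicities a, b, c, d.
  have key : ∀ e, ∃ m : ℕ, P e * (n : ℝ) = (m : ℝ) := by
    intro e
    obtain ⟨z, hz⟩ := hint e
    have hz0 : (0 : ℝ) ≤ (z : ℝ) := by
      rw [← hz]; exact mul_nonneg (hnn e) (Nat.cast_nonneg n)
    lift z to ℕ using (by exact_mod_cast hz0)
    exact ⟨z, by exact_mod_cast hz⟩
  obtain ⟨a, ha⟩ := key (false, false)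
  obtain ⟨b, hb⟩ := key (false, true)
  obtain ⟨c, hc⟩ := key (true, false)
  obtain ⟨d, hd⟩ := key (true, true)
  have hbc : b = c := by
    have h1 : P (false, true) = P (true, false) := by
      have := hstat false; linarith
    have h2 : (b : ℝ) = (c : ℝ) := by
      rw [← hb, ← hc, h1]
    exact_mod_cast h2
  have hab : a + b = n₁ := by
    have : ((a + b : ℕ) : ℝ) = (n₁ : ℝ) := by
      push_cast
      rw [hn1, add_mul]; linarith
    exact_mod_cast this
  have hcd : c + d = n₂ := by
    have : ((c + d : ℕ) : ℝ) = (n₂ : ℝ) := by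
      push_cast
      rw [hn2, add_mul]; linarith
    exact_mod_cast this
  have hdM : d ≤ M := by
    have : (d : ℝ) ≤ (M : ℝ) := by rw [← hd]; exact hMlb
    exact_mod_cast this
  have hlt : M + a < c + d := by
    have : ((M + a : ℕ) : ℝ) < ((c + d : ℕ) : ℝ) := by
      push_cast; linarith
    exact_mod_cast this
  -- The four cells of the pair (r, s).
  have e1 : Finset.univ.filter (fun j => s j = true ∧ r j = true)
      = Finset.univ.filter (fun j => r j = true ∧ s j = true) := by
    ext j; simp only [Finset.mem_filter]; tauto
  have e2 : Finset.univ.filter (fun j => s j = true ∧ r j = false)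
      = Finset.univ.filter (fun j => r j = false ∧ s j = true) := by
    ext j; simp only [Finset.mem_filter]; tauto
  have hAB : (Finset.univ.filter (fun j => r j = true ∧ s j = true)).card
      + (Finset.univ.filter (fun j => r j = true ∧ s j = false)).card = n₂ := by
    have := Finset.card_filter_add_card_filter_not
      (s := Finset.univ.filter (fun j => r j = true)) (p := fun j => s j = true)
    simp only [Finset.filter_filter, Bool.not_eq_true] at this
    rw [hr1] at this; exact this
  have hAC : (Finset.univ.filter (fun j => r j = true ∧ s j = true)).card
      + (Finset.univ.filter (fun j => r j = false ∧ s j = true)).card = n₂ := by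
    have := Finset.card_filter_add_card_filter_not
      (s := Finset.univ.filter (fun j => s j = true)) (p := fun j => r j = true)
    simp only [Finset.filter_filter, Bool.not_eq_true] at this
    rw [hs1, e1, e2] at this; exact this
  have hCD : (Finset.univ.filter (fun j => r j = false ∧ s j = true)).card
      + (Finset.univ.filter (fun j => r j = false ∧ s j = false)).card = n₁ := by
    have := Finset.card_filter_add_card_filter_not
      (s := Finset.univ.filter (fun j => r j = false)) (p := fun j => s j = true)
    simp only [Finset.filter_filter, Bool.not_eq_true] at this
    rw [hr0] at this; exact this
  set A := Finset.univ.filter (fun j => r j = true ∧ s j = true) with hAdef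
  set B := Finset.univ.filter (fun j => r j = true ∧ s j = false) with hBdef
  set C := Finset.univ.filter (fun j => r j = false ∧ s j = true) with hCdef
  set Dc := Finset.univ.filter (fun j => r j = false ∧ s j = false) with hDdef
  -- choose the subsets
  obtain ⟨A₁, hA₁sub, hA₁card⟩ := Finset.exists_subset_card_eq (s := A) (n := d) (by omega)
  obtain ⟨B₁, hB₁sub, hB₁card⟩ := Finset.exists_subset_card_eq (s := B) (n := c + d - (M + a)) (by omega)
  obtain ⟨C₁, hC₁sub, hC₁card⟩ := Finset.exists_subset_card_eq (s := C) (n := c + d - (M + a)) (by omega)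
  have hmA : ∀ j ∈ A₁, r j = true ∧ s j = true := fun j hj =>
    (Finset.mem_filter.mp (hA₁sub hj)).2
  have hmB : ∀ j ∈ B₁, r j = true ∧ s j = false := fun j hj =>
    (Finset.mem_filter.mp (hB₁sub hj)).2
  have hmC : ∀ j ∈ C₁, r j = false ∧ s j = true := fun j hj =>
    (Finset.mem_filter.mp (hC₁sub hj)).2
  have hmD : ∀ j ∈ Dc, r j = false ∧ s j = false := fun j hj =>
    (Finset.mem_filter.mp hj).2
  refine ⟨fun j => decide (j ∈ A₁ ∨ j ∈ Dc ∨ j ∈ C₁),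
          fun j => decide (j ∈ A₁ ∨ j ∈ Dc ∨ j ∈ B₁), ?_, ?_, ?_⟩
  · -- launch step
    rintro ⟨x, y⟩
    cases x <;> cases y
    · -- (false, false)
      have hset : Finset.univ.filter
            (fun j => (r j, decide (j ∈ A₁ ∨ j ∈ Dc ∨ j ∈ C₁)) = ((false, false) : Bool × Bool))
          = Finset.univ.filter (fun j => r j = false) \ (Dc ∪ C₁) := by
        ext j
        simp only [Finset.mem_filter, Finset.mem_univ, true_and, Finset.mem_sdiff,
          Finset.mem_union, Prod.mk.injEq, decide_eq_false_iff_not, not_or]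
        constructor
        · rintro ⟨h1, h2⟩
          exact ⟨h1, h2.2.1, h2.2.2⟩
        · rintro ⟨h1, h2⟩
          refine ⟨h1, fun hA₁ => ?_, h2.1, h2.2⟩
          exact absurd (hmA j hA₁).1 (by simp [h1])
      have hsub : Dc ∪ C₁ ⊆ Finset.univ.filter (fun j => r j = false) := by
        intro j hj
        rcases Finset.mem_union.mp hj with h | h
        · exact Finset.mem_filter.mpr ⟨Finset.mem_univ j, (hmD j h).1⟩
        · exact Finset.mem_filter.mpr ⟨Finset.mem_univ j, (hmC j h).1⟩
      have hdisj : Disjoint Dc C₁ := by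
        rw [Finset.disjoint_left]
        intro j hj hj'
        have h1 := (hmD j hj).2
        have h2 := (hmC j hj').2
        rw [h1] at h2; exact Bool.noConfusion h2
      have hval : (Finset.univ.filter (fun j => r j = false) \ (Dc ∪ C₁)).card = a := by
        rw [Finset.card_sdiff_of_subset hsub, Finset.card_union_of_disjoint hdisj, hr0, hC₁card]
        omega
      rw [hset, hval, ha]
    · -- (false, true)
      have hset : Finset.univ.filter
            (fun j => (r j, decide (j ∈ A₁ ∨ j ∈ Dc ∨ j ∈ C₁)) = ((false, true) : Bool × Bool))
          = Dc ∪ C₁ := by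
        ext j
        simp only [Finset.mem_filter, Finset.mem_univ, true_and, Finset.mem_union,
          Prod.mk.injEq, decide_eq_true_eq]
        constructor
        · rintro ⟨h1, h | h | h⟩
          · exact absurd (hmA j h).1 (by simp [h1])
          · exact Or.inl h
          · exact Or.inr h
        · rintro (h | h)
          · exact ⟨(hmD j h).1, Or.inr (Or.inl h)⟩
          · exact ⟨(hmC j h).1, Or.inr (Or.inr h)⟩
      have hdisj : Disjoint Dc C₁ := by
        rw [Finset.disjoint_left]
        intro j hj hj'
        have h1 := (hmD j hj).2
        have h2 := (hmC j hj').2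
        rw [h1] at h2; exact Bool.noConfusion h2
      have hval : (Dc ∪ C₁).card = b := by
        rw [Finset.card_union_of_disjoint hdisj, hC₁card]
        omega
      rw [hset, hval, hb]
    · -- (true, false)
      have hset : Finset.univ.filter
            (fun j => (r j, decide (j ∈ A₁ ∨ j ∈ Dc ∨ j ∈ C₁)) = ((true, false) : Bool × Bool))
          = Finset.univ.filter (fun j => r j = true) \ A₁ := by
        ext j
        simp only [Finset.mem_filter, Finset.mem_univ, true_and, Finset.mem_sdiff,
          Prod.mk.injEq, decide_eq_false_iff_not, not_or]
        constructor
        · rintro ⟨h1, h2⟩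
          exact ⟨h1, h2.1⟩
        · rintro ⟨h1, h2⟩
          refine ⟨h1, h2, fun hD => ?_, fun hC => ?_⟩
          · exact absurd (hmD j hD).1 (by simp [h1])
          · exact absurd (hmC j hC).1 (by simp [h1])
      have hsub : A₁ ⊆ Finset.univ.filter (fun j => r j = true) := fun j hj =>
        Finset.mem_filter.mpr ⟨Finset.mem_univ j, (hmA j hj).1⟩
      have hval : (Finset.univ.filter (fun j => r j = true) \ A₁).card = c := by
        rw [Finset.card_sdiff_of_subset hsub, hr1, hA₁card]
        omega
      rw [hset, hval, hc]
    · -- (true, true)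
      have hset : Finset.univ.filter
            (fun j => (r j, decide (j ∈ A₁ ∨ j ∈ Dc ∨ j ∈ C₁)) = ((true, true) : Bool × Bool))
          = A₁ := by
        ext j
        simp only [Finset.mem_filter, Finset.mem_univ, true_and, Prod.mk.injEq,
          decide_eq_true_eq]
        constructor
        · rintro ⟨h1, h | h | h⟩
          · exact h
          · exact absurd (hmD j h).1 (by simp [h1])
          · exact absurd (hmC j h).1 (by simp [h1])
        · intro h
          exact ⟨(hmA j h).1, Or.inl h⟩
      rw [hset, hA₁card, hd]
  · -- landing step
    rintro ⟨x, y⟩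
    cases x <;> cases y
    · -- (false, false)
      have hset : Finset.univ.filter
            (fun j => ((decide (j ∈ A₁ ∨ j ∈ Dc ∨ j ∈ B₁) : Bool), s j) = ((false, false) : Bool × Bool))
          = Finset.univ.filter (fun j => s j = false) \ (Dc ∪ B₁) := by
        ext j
        simp only [Finset.mem_filter, Finset.mem_univ, true_and, Finset.mem_sdiff,
          Finset.mem_union, Prod.mk.injEq, decide_eq_false_iff_not, not_or]
        constructor
        · rintro ⟨h1, h2⟩
          exact ⟨h2, h1.2.1, h1.2.2⟩
        · rintro ⟨h1, h2⟩
          refine ⟨⟨fun hA₁ => ?_, h2.1, h2.2⟩, h1⟩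
          exact absurd (hmA j hA₁).2 (by simp [h1])
      have hsub : Dc ∪ B₁ ⊆ Finset.univ.filter (fun j => s j = false) := by
        intro j hj
        rcases Finset.mem_union.mp hj with h | h
        · exact Finset.mem_filter.mpr ⟨Finset.mem_univ j, (hmD j h).2⟩
        · exact Finset.mem_filter.mpr ⟨Finset.mem_univ j, (hmB j h).2⟩
      have hdisj : Disjoint Dc B₁ := by
        rw [Finset.disjoint_left]
        intro j hj hj'
        have h1 := (hmD j hj).1
        have h2 := (hmB j hj').1
        rw [h1] at h2; exact Bool.noConfusion h2
      have hval : (Finset.univ.filter (fun j => s j = false) \ (Dc ∪ B₁)).card = a := by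
        rw [Finset.card_sdiff_of_subset hsub, Finset.card_union_of_disjoint hdisj, hs0, hB₁card]
        omega
      rw [hset, hval, ha]
    · -- (false, true)
      have hset : Finset.univ.filter
            (fun j => ((decide (j ∈ A₁ ∨ j ∈ Dc ∨ j ∈ B₁) : Bool), s j) = ((false, true) : Bool × Bool))
          = Finset.univ.filter (fun j => s j = true) \ A₁ := by
        ext j
        simp only [Finset.mem_filter, Finset.mem_univ, true_and, Finset.mem_sdiff,
          Prod.mk.injEq, decide_eq_false_iff_not, not_or]
        constructor
        · rintro ⟨h1, h2⟩
          exact ⟨h2, h1.1⟩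
        · rintro ⟨h1, h2⟩
          refine ⟨⟨h2, fun hD => ?_, fun hB => ?_⟩, h1⟩
          · exact absurd (hmD j hD).2 (by simp [h1])
          · exact absurd (hmB j hB).2 (by simp [h1])
      have hsub : A₁ ⊆ Finset.univ.filter (fun j => s j = true) := fun j hj =>
        Finset.mem_filter.mpr ⟨Finset.mem_univ j, (hmA j hj).2⟩
      have hval : (Finset.univ.filter (fun j => s j = true) \ A₁).card = b := by
        rw [Finset.card_sdiff_of_subset hsub, hs1, hA₁card]
        omega
      rw [hset, hval, hb]
    · -- (true, false)
      have hset : Finset.univ.filter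
            (fun j => ((decide (j ∈ A₁ ∨ j ∈ Dc ∨ j ∈ B₁) : Bool), s j) = ((true, false) : Bool × Bool))
          = Dc ∪ B₁ := by
        ext j
        simp only [Finset.mem_filter, Finset.mem_univ, true_and, Finset.mem_union,
          Prod.mk.injEq, decide_eq_true_eq]
        constructor
        · rintro ⟨h | h | h, h1⟩
          · exact absurd (hmA j h).2 (by simp [h1])
          · exact Or.inl h
          · exact Or.inr h
        · rintro (h | h)
          · exact ⟨Or.inr (Or.inl h), (hmD j h).2⟩
          · exact ⟨Or.inr (Or.inr h), (hmB j h).2⟩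
      have hdisj : Disjoint Dc B₁ := by
        rw [Finset.disjoint_left]
        intro j hj hj'
        have h1 := (hmD j hj).1
        have h2 := (hmB j hj').1
        rw [h1] at h2; exact Bool.noConfusion h2
      have hval : (Dc ∪ B₁).card = c := by
        rw [Finset.card_union_of_disjoint hdisj, hB₁card]
        omega
      rw [hset, hval, hc]
    · -- (true, true)
      have hset : Finset.univ.filter
            (fun j => ((decide (j ∈ A₁ ∨ j ∈ Dc ∨ j ∈ B₁) : Bool), s j) = ((true, true) : Bool × Bool))
          = A₁ := by
        ext j
        simp only [Finset.mem_filter, Finset.mem_univ, true_and, Prod.mk.injEq,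
          decide_eq_true_eq]
        constructor
        · rintro ⟨h | h | h, h1⟩
          · exact h
          · exact absurd (hmD j h).2 (by simp [h1])
          · exact absurd (hmB j h).2 (by simp [h1])
        · intro h
          exact ⟨Or.inl h, (hmA j h).2⟩
      rw [hset, hA₁card, hd]
  · -- the intermediate 1-1 flow count
    have hset : Finset.univ.filter
          (fun j => (decide (j ∈ A₁ ∨ j ∈ Dc ∨ j ∈ C₁) : Bool) = true
            ∧ (decide (j ∈ A₁ ∨ j ∈ Dc ∨ j ∈ B₁) : Bool) = true)
        = A₁ ∪ Dc := by
      ext j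
      simp only [Finset.mem_filter, Finset.mem_univ, true_and, Finset.mem_union,
        decide_eq_true_eq]
      constructor
      · rintro ⟨h | h | h, h'⟩
        · exact Or.inl h
        · exact Or.inr h
        · rcases h' with h' | h' | h'
          · exact absurd (hmA j h').1 (by simp [(hmC j h).1])
          · exact absurd (hmD j h').2 (by simp [(hmC j h).2])
          · exact absurd (hmB j h').1 (by simp [(hmC j h).1])
      · rintro (h | h)
        · exact ⟨Or.inl h, Or.inl h⟩
        · exact ⟨Or.inr (Or.inl h), Or.inr (Or.inl h)⟩
    have hdisj : Disjoint A₁ Dc := by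
      rw [Finset.disjoint_left]
      intro j hj hj'
      have h1 := (hmA j hj).1
      have h2 := (hmD j hj').1
      rw [h2] at h1; exact Bool.noConfusion h1
    have hval : (A₁ ∪ Dc).card = M + a := by
      rw [Finset.card_union_of_disjoint hdisj, hA₁card]
      omega
    rw [hset, hval]
    push_cast
    rw [ha]
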